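/- arXiv:2006.11311 — 3 statements merged into one kernel-verified Lean document; each statement's English description precedes it below -/
import Mathlib

section
/- Let y : [0,T) → [0,∞) be a C¹ function satisfying y'(t) ≥ -C₁ + C₂ y(t)^p for all t ∈ [0,T), where C₁ > 0, C₂ > 0, p > 1, and assume C₂ y(0)^p > C₁. Then T ≤ ∫_{y(0)}^∞ dz / (C₂ z^p - C₁), and in particular T is finite. -/
open Set MeasureTheory

theorem blowup_time_bound_C1_pos
    (T : ℝ) (hT : 0 < T) (y y' : ℝ → ℝ) (C₁ C₂ p : ℝ)
    (hC₁ : 0 < C₁) (hC₂ : 0 < C₂) (hp : 1 < p)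
    (hy : ∀ t ∈ Ico (0:ℝ) T, HasDerivWithinAt y (y' t) (Ico (0:ℝ) T) t)
    (hy'cont : ContinuousOn y' (Ico (0:ℝ) T))
    (hnn : ∀ t ∈ Ico (0:ℝ) T, 0 ≤ y t)
    (h0 : C₁ < C₂ * y 0 ^ p)
    (hineq : ∀ t ∈ Ico (0:ℝ) T, y' t ≥ -C₁ + C₂ * y t ^ p) :
    T ≤ ∫ z in Ioi (y 0), 1 / (C₂ * z ^ p - C₁) := by
  set f : ℝ → ℝ := fun z => 1 / (C₂ * z ^ p - C₁) with hf
  have hppos : (0:ℝ) < p := lt_trans one_pos hp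
  have hT0 : (0:ℝ) ∈ Ico (0:ℝ) T := ⟨le_refl 0, hT⟩
  have y0nn : 0 ≤ y 0 := hnn 0 hT0
  have y0pos : 0 < y 0 := by
    rcases y0nn.lt_or_eq with h | h
    · exact h
    · exfalso
      rw [← h, Real.zero_rpow (ne_of_gt hppos), mul_zero] at h0
      linarith
  have ycont : ContinuousOn y (Ico (0:ℝ) T) := fun t ht => (hy t ht).continuousWithinAt
  -- Step A: the denominator stays positive along the trajectory
  have keyA : ∀ t ∈ Ico (0:ℝ) T, C₁ < C₂ * y t ^ p := by
    by_contra hcon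
    push_neg at hcon
    obtain ⟨t0, ht0, ht0le⟩ := hcon
    set S : Set ℝ := {t | t ∈ Ico (0:ℝ) T ∧ C₂ * y t ^ p ≤ C₁} with hS
    have hne : S.Nonempty := ⟨t0, ht0, ht0le⟩
    have hbdd : BddBelow S := ⟨0, fun x hx => hx.1.1⟩
    set a := sInf S with ha
    have ha0 : 0 ≤ a := le_csInf hne fun x hx => hx.1.1
    have haT : a < T := lt_of_le_of_lt (csInf_le hbdd ⟨ht0, ht0le⟩) ht0.2
    have haI : a ∈ Ico (0:ℝ) T := ⟨ha0, haT⟩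
    -- continuity of t ↦ C₂ * y t ^ p on Ico 0 T
    have φcont : ContinuousOn (fun t => C₂ * y t ^ p) (Ico (0:ℝ) T) :=
      continuousOn_const.mul (ycont.rpow_const fun t ht => Or.inr (le_of_lt hppos))
    -- a satisfies the inequality
    have haS : C₂ * y a ^ p ≤ C₁ := by
      obtain ⟨u, hu_anti, hu_tend, hu_mem⟩ := exists_seq_tendsto_sInf hne hbdd
      have humemS : ∀ n, u n ∈ S := hu_mem
      have hu_tendW : Filter.Tendsto u Filter.atTop (nhdsWithin a (Ico (0:ℝ) T)) := by
        apply tendsto_nhdsWithin_of_tendsto_nhds_of_eventually_within _ hu_tend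
        exact Filter.Eventually.of_forall fun n => (humemS n).1
      have := (φcont a haI).tendsto.comp hu_tendW
      exact le_of_tendsto this (Filter.Eventually.of_forall fun n => (humemS n).2)
    -- y is monotone on [0, a]
    have hsub : Icc (0:ℝ) a ⊆ Ico (0:ℝ) T := fun x hx => ⟨hx.1, lt_of_le_of_lt hx.2 haT⟩
    have hmono : MonotoneOn y (Icc (0:ℝ) a) := by
      apply monotoneOn_of_hasDerivWithinAt_nonneg (convex_Icc 0 a) (ycont.mono hsub)
        (f' := y')
      · intro x hx
        rw [interior_Icc] at hx ⊢
        exact (hy x (hsub (Ioo_subset_Icc_self hx))).mono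
          (fun z hz => hsub (Ioo_subset_Icc_self hz))
      · intro x hx
        rw [interior_Icc] at hx
        have hxI : x ∈ Ico (0:ℝ) T := hsub (Ioo_subset_Icc_self hx)
        have hxnS : x ∉ S := fun hmem => absurd (csInf_le hbdd hmem) (not_le.mpr hx.2)
        have : C₁ < C₂ * y x ^ p := by
          by_contra hle
          exact hxnS ⟨hxI, le_of_not_gt hle⟩
        linarith [hineq x hxI]
    have h0a : y 0 ≤ y a := hmono ⟨le_refl 0, ha0⟩ ⟨ha0, le_refl a⟩ ha0
    have : C₂ * y 0 ^ p ≤ C₂ * y a ^ p :=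
      mul_le_mul_of_nonneg_left (Real.rpow_le_rpow y0nn h0a (le_of_lt hppos)) (le_of_lt hC₂)
    linarith
  have dpos : ∀ t ∈ Ico (0:ℝ) T, 0 < C₂ * y t ^ p - C₁ := fun t ht => by
    linarith [keyA t ht]
  -- Step B: y t ≥ y 0
  have ymono : ∀ t ∈ Ico (0:ℝ) T, y 0 ≤ y t := by
    intro t ht
    have hsub : Icc (0:ℝ) t ⊆ Ico (0:ℝ) T := fun x hx => ⟨hx.1, lt_of_le_of_lt hx.2 ht.2⟩
    have hmono : MonotoneOn y (Icc (0:ℝ) t) := by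
      apply monotoneOn_of_hasDerivWithinAt_nonneg (convex_Icc 0 t) (ycont.mono hsub)
        (f' := y')
      · intro x hx
        rw [interior_Icc] at hx ⊢
        exact (hy x (hsub (Ioo_subset_Icc_self hx))).mono
          (fun z hz => hsub (Ioo_subset_Icc_self hz))
      · intro x hx
        rw [interior_Icc] at hx
        have hxI : x ∈ Ico (0:ℝ) T := hsub (Ioo_subset_Icc_self hx)
        linarith [hineq x hxI, keyA x hxI]
    exact hmono ⟨le_refl 0, ht.1⟩ ⟨ht.1, le_refl t⟩ ht.1
  -- Step C: integrability of f on Ioi (y 0)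
  have hfm : Measurable f := by fun_prop
  have hy0p : (0:ℝ) < y 0 ^ p := Real.rpow_pos_of_pos y0pos p
  have δpos : 0 < C₂ - C₁ / y 0 ^ p := by
    rw [sub_pos, div_lt_iff₀ hy0p]
    linarith
  have hzbound : ∀ z, y 0 ≤ z → (C₂ - C₁ / y 0 ^ p) * z ^ p ≤ C₂ * z ^ p - C₁ := by
    intro z hz
    have h1 : y 0 ^ p ≤ z ^ p := Real.rpow_le_rpow y0nn hz (le_of_lt hppos)
    have h2 : C₁ / y 0 ^ p * y 0 ^ p = C₁ := div_mul_cancel₀ _ (ne_of_gt hy0p)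
    have h3 : C₁ / y 0 ^ p * y 0 ^ p ≤ C₁ / y 0 ^ p * z ^ p :=
      mul_le_mul_of_nonneg_left h1 (le_of_lt (div_pos hC₁ hy0p))
    nlinarith
  have dposz : ∀ z, y 0 ≤ z → 0 < C₂ * z ^ p - C₁ := by
    intro z hz
    have hzpos : 0 < z := lt_of_lt_of_le y0pos hz
    exact lt_of_lt_of_le (mul_pos δpos (Real.rpow_pos_of_pos hzpos p)) (hzbound z hz)
  have hfnonneg : ∀ z ∈ Ioi (y 0), 0 ≤ f z := fun z hz =>
    div_nonneg zero_le_one (le_of_lt (dposz z (le_of_lt hz)))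
  have hint : IntegrableOn f (Ioi (y 0)) := by
    have hig : IntegrableOn (fun z => (C₂ - C₁ / y 0 ^ p)⁻¹ * z ^ (-p)) (Ioi (y 0)) :=
      (integrableOn_Ioi_rpow_of_lt (by linarith : -p < -1) y0pos).const_mul _
    apply Integrable.mono' hig (hfm.aestronglyMeasurable.restrict)
    filter_upwards [ae_restrict_mem measurableSet_Ioi] with z hz
    have hzpos : 0 < z := lt_trans y0pos hz
    rw [Real.norm_eq_abs, abs_of_nonneg (hfnonneg z hz), hf]
    simp only [one_div]
    rw [Real.rpow_neg (le_of_lt hzpos), ← mul_inv]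
    exact inv_anti₀ (mul_pos δpos (Real.rpow_pos_of_pos hzpos p)) (hzbound z (le_of_lt hz))
  -- continuity of f on Ici (y 0)
  have hfcont : ContinuousOn f (Ici (y 0)) := by
    apply ContinuousOn.div continuousOn_const
    · exact (continuousOn_const.mul ((continuousOn_id).rpow_const fun z hz =>
        Or.inl (ne_of_gt (lt_of_lt_of_le y0pos hz)))).sub continuousOn_const
    · exact fun z hz => ne_of_gt (dposz z hz)
  -- Step D/E: F(y t) - t is monotone
  set F : ℝ → ℝ := fun x => ∫ z in (y 0)..x, f z with hF
  have hG : ∀ t ∈ Ico (0:ℝ) T,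
      HasDerivWithinAt (fun s => F (y s)) (f (y t) * y' t) (Ico (0:ℝ) T) t := by
    intro t ht
    have hyt : y 0 ≤ y t := ymono t ht
    have hytpos : 0 < y t := lt_of_lt_of_le y0pos hyt
    have hii : IntervalIntegrable f volume (y 0) (y t) := by
      apply ContinuousOn.intervalIntegrable
      apply hfcont.mono
      rw [uIcc_of_le hyt]
      exact Icc_subset_Ici_self
    have hca : ContinuousAt f (y t) := by
      apply ContinuousAt.div continuousAt_const
      · exact (continuousAt_const.mul (Real.continuousAt_rpow_const (y t) p
          (Or.inl (ne_of_gt hytpos)))).sub continuousAt_const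
      · exact ne_of_gt (dpos t ht)
    have hFTC : HasDerivAt F (f (y t)) (y t) :=
      intervalIntegral.integral_hasDerivAt_right hii
        (hfm.stronglyMeasurable.stronglyMeasurableAtFilter) hca
    exact hFTC.comp_hasDerivWithinAt t (hy t ht)
  have hmono2 : MonotoneOn (fun s => F (y s) - s) (Ico (0:ℝ) T) := by
    apply monotoneOn_of_hasDerivWithinAt_nonneg (convex_Ico 0 T)
      (f' := fun s => f (y s) * y' s - 1)
    · intro s hs
      exact ((hG s hs).sub (hasDerivWithinAt_id s _)).continuousWithinAt
    · intro x hx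
      rw [interior_Ico] at hx ⊢
      have hxI : x ∈ Ico (0:ℝ) T := Ioo_subset_Ico_self hx
      exact (((hG x hxI).sub (hasDerivWithinAt_id x _)).mono Ioo_subset_Ico_self)
    · intro x hx
      rw [interior_Ico] at hx
      have hxI : x ∈ Ico (0:ℝ) T := Ioo_subset_Ico_self hx
      have hd := dpos x hxI
      have h1 : (C₂ * y x ^ p - C₁)⁻¹ * (C₂ * y x ^ p - C₁) ≤
          (C₂ * y x ^ p - C₁)⁻¹ * y' x :=
        mul_le_mul_of_nonneg_left (by linarith [hineq x hxI]) (inv_nonneg.mpr (le_of_lt hd))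
      rw [inv_mul_cancel₀ (ne_of_gt hd)] at h1
      have hfy : f (y x) = (C₂ * y x ^ p - C₁)⁻¹ := one_div _
      rw [hfy]
      linarith
  -- Conclusion
  have key : ∀ t ∈ Ico (0:ℝ) T, t ≤ ∫ z in Ioi (y 0), f z := by
    intro t ht
    have h1 : F (y 0) - 0 ≤ F (y t) - t := hmono2 hT0 ht ht.1
    have h2 : F (y 0) = 0 := intervalIntegral.integral_same
    have h3 : F (y t) ≤ ∫ z in Ioi (y 0), f z := by
      have heq : F (y t) = ∫ z in Ioc (y 0) (y t), f z :=
        intervalIntegral.integral_of_le (ymono t ht)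
      rw [heq]
      apply setIntegral_mono_set hint
      · filter_upwards [ae_restrict_mem measurableSet_Ioi] with z hz
        exact hfnonneg z hz
      · exact HasSubset.Subset.eventuallyLE Ioc_subset_Ioi_self
    linarith
  have Inn : 0 ≤ ∫ z in Ioi (y 0), f z := setIntegral_nonneg measurableSet_Ioi hfnonneg
  by_contra hc
  push_neg at hc
  have ht1 : ((∫ z in Ioi (y 0), f z) + T) / 2 ∈ Ico (0:ℝ) T := ⟨by linarith, by linarith⟩
  linarith [key _ ht1]
end

section
/- Let f : ℝ → ℝ be a C¹ convex function with f(0) = 0, and suppose there exists λ > 0 such that f(s) > 0 for all s ≥ λ, and ∫_λ^∞ ds/f(s) < ∞. Then for every μ > 0 there exists C ≥ λ such that f(s) ≥ μ s for all s ≥ C. -/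
open Set MeasureTheory

theorem convex_integrable_reciprocal_superlinear
    (f : ℝ → ℝ) (hf : ContDiff ℝ 1 f) (hconv : ConvexOn ℝ univ f)
    (hf0 : f 0 = 0) (lam : ℝ) (hlam : 0 < lam)
    (hpos : ∀ s ≥ lam, 0 < f s)
    (hint : IntegrableOn (fun s => 1 / f s) (Ici lam)) :
    ∀ μ > (0:ℝ), ∃ C ≥ lam, ∀ s ≥ C, f s ≥ μ * s := by
  -- slope monotonicity: for 0 < a ≤ b, f a ≤ (a/b) * f b
  have slope : ∀ a b : ℝ, 0 < a → a ≤ b → f a ≤ (a / b) * f b := by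
    intro a b ha hab
    have hb : 0 < b := ha.trans_le hab
    have h1 : (0:ℝ) ≤ a / b := by positivity
    have h2 : (0:ℝ) ≤ 1 - a / b := by
      have : a / b ≤ 1 := (div_le_one hb).mpr hab
      linarith
    have := hconv.2 (mem_univ b) (mem_univ 0) h1 h2 (by ring)
    simpa [smul_eq_mul, hf0, div_mul_cancel₀ a hb.ne'] using this
  intro μ hμ
  by_contra h
  push_neg at h
  -- then f C < μ * C for all C ≥ lam
  have key : ∀ C ≥ lam, f C < μ * C := by
    intro C hC
    obtain ⟨s, hs, hfs⟩ := h C hC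
    have hC0 : 0 < C := hlam.trans_le hC
    have hs0 : 0 < s := hC0.trans_le hs
    have := slope C s hC0 hs
    have hfs' : (C / s) * f s < (C / s) * (μ * s) := by
      apply mul_lt_mul_of_pos_left hfs (by positivity)
    have : f C < (C / s) * (μ * s) := lt_of_le_of_lt this hfs'
    calc f C < (C / s) * (μ * s) := this
      _ = μ * C := by field_simp
  -- so 1/(μ s) ≤ 1/f s on Ici lam, giving integrability of s⁻¹, contradiction
  have hmono : IntegrableOn (fun s : ℝ => 1 / (μ * s)) (Ici lam) := by
    apply Integrable.mono hint
    · apply Measurable.aestronglyMeasurable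
      exact measurable_const.div (measurable_const.mul measurable_id)
    · filter_upwards [ae_restrict_mem measurableSet_Ici] with s hs
      have hs' : lam ≤ s := hs
      have hfs := hpos s hs'
      have hμs : 0 < μ * s := mul_pos hμ (hlam.trans_le hs')
      rw [Real.norm_eq_abs, Real.norm_eq_abs, abs_of_pos (one_div_pos.mpr hμs),
        abs_of_pos (one_div_pos.mpr hfs)]
      exact one_div_le_one_div_of_le hfs (key s hs').le
  have : IntegrableOn (fun s : ℝ => s⁻¹) (Ici lam) := by
    have h2 := hmono.const_mul μ
    have heq : (fun s : ℝ => μ * (1 / (μ * s))) = fun s : ℝ => s⁻¹ := by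
      funext s
      rw [one_div, mul_inv, ← mul_assoc, mul_inv_cancel₀ hμ.ne', one_mul]
    rwa [heq] at h2
  exact not_IntegrableOn_Ici_inv this
end

section
/- Let f : ℝ → ℝ be continuous with f(s) > 0 for s ≥ λ (for some λ > 0) and ∫_λ^∞ ds/f(s) < ∞. Let ζ : [0,∞) → [0,∞) be continuous with inf_{t≥0} ∫_0^t (ζ(s)−1) ds =: m ∈ (−∞, 0]. Suppose y : [0,T) → ℝ is C¹, y(0) ≥ λ, and y'(t) ≥ (ζ(t)/2) f(y(t)) for all t ∈ [0,T), and suppose moreover f is nondecreasing on [λ,∞). Then T ≤ −m + 2 ∫_{y(0)}^∞ ds/f(s). -/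
open Set MeasureTheory intervalIntegral

theorem blowup_time_bound_eigenfunction_method
    (f : ℝ → ℝ) (hf : Continuous f) (lam : ℝ) (hlam : 0 < lam)
    (hpos : ∀ s ≥ lam, 0 < f s)
    (hmono : MonotoneOn f (Ici lam))
    (hint : IntegrableOn (fun s => 1 / f s) (Ici lam))
    (ζ : ℝ → ℝ) (hζ : Continuous ζ) (hζnn : ∀ t ≥ (0:ℝ), 0 ≤ ζ t)
    (m : ℝ) (hm : IsGLB {x : ℝ | ∃ t ≥ (0:ℝ), x = ∫ s in (0:ℝ)..t, (ζ s - 1)} m)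
    (hm0 : m ≤ 0)
    (T : ℝ) (hT : 0 < T) (y y' : ℝ → ℝ)
    (hy : ∀ t ∈ Ico (0:ℝ) T, HasDerivWithinAt y (y' t) (Ico (0:ℝ) T) t)
    (hy'cont : ContinuousOn y' (Ico (0:ℝ) T))
    (hy0 : y 0 ≥ lam)
    (hineq : ∀ t ∈ Ico (0:ℝ) T, y' t ≥ ζ t / 2 * f (y t)) :
    T ≤ -m + 2 * ∫ s in Ioi (y 0), 1 / f s := by
  set I := ∫ s in Ioi (y 0), 1 / f s with hIdef
  -- f is positive a bit below lam as well
  obtain ⟨ε, hε, hfε⟩ : ∃ ε > 0, ∀ s, lam - ε ≤ s → 0 < f s := by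
    have hop : IsOpen {s : ℝ | 0 < f s} := isOpen_lt continuous_const hf
    obtain ⟨δ, hδ, hball⟩ := Metric.mem_nhds_iff.1 (hop.mem_nhds (hpos lam le_rfl))
    refine ⟨δ/2, by positivity, fun s hs => ?_⟩
    rcases le_or_gt lam s with h | h
    · exact hpos s h
    · exact hball (by rw [Metric.mem_ball, Real.dist_eq, abs_lt]; constructor <;> linarith)
  have hycont : ContinuousOn y (Ico 0 T) := fun t ht => (hy t ht).continuousWithinAt
  -- y is monotone on any subinterval where it stays ≥ lam - ε
  have monA : ∀ a b : ℝ, 0 ≤ a → b < T → (∀ s ∈ Icc a b, lam - ε ≤ y s) →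
      MonotoneOn y (Icc a b) := by
    intro a b ha hb hge
    have hsub : Icc a b ⊆ Ico 0 T := fun s hs => ⟨le_trans ha hs.1, lt_of_le_of_lt hs.2 hb⟩
    have hderiv : ∀ s ∈ Ioo a b, HasDerivAt y (y' s) s := by
      intro s hs
      have hsmem : s ∈ Ico (0:ℝ) T := hsub ⟨hs.1.le, hs.2.le⟩
      refine (hy s hsmem).hasDerivAt (mem_nhds_iff.2 ⟨Ioo 0 T, fun x hx => ⟨hx.1.le, hx.2⟩,
        isOpen_Ioo, ⟨lt_of_le_of_lt ha hs.1, lt_trans hs.2 hb⟩⟩)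
    apply monotoneOn_of_deriv_nonneg (convex_Icc a b) (hycont.mono hsub)
    · rw [interior_Icc]
      exact fun s hs => (hderiv s hs).differentiableAt.differentiableWithinAt
    · rw [interior_Icc]
      intro s hs
      rw [(hderiv s hs).deriv]
      have h1 := hineq s (hsub ⟨hs.1.le, hs.2.le⟩)
      have h2 : 0 < f (y s) := hfε _ (hge s ⟨hs.1.le, hs.2.le⟩)
      have h3 : 0 ≤ ζ s := hζnn s (le_trans ha hs.1.le)
      nlinarith
  -- y stays ≥ lam
  have hylam : ∀ t ∈ Ico (0:ℝ) T, lam ≤ y t := by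
    by_contra hcon
    push_neg at hcon
    obtain ⟨t, ht, hyt⟩ := hcon
    set A : Set ℝ := Icc 0 t ∩ y ⁻¹' Ici lam with hA
    have hAne : A.Nonempty := ⟨0, ⟨le_rfl, ht.1⟩, hy0⟩
    have hIccsub : Icc 0 t ⊆ Ico 0 T := fun s hs => ⟨hs.1, lt_of_le_of_lt hs.2 ht.2⟩
    have hAclosed : IsClosed A :=
      (hycont.mono hIccsub).preimage_isClosed_of_isClosed isClosed_Icc isClosed_Ici
    have hAcomp : IsCompact A :=
      isCompact_Icc.of_isClosed_subset hAclosed inter_subset_left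
    set u := sSup A with hu
    have huA : u ∈ A := hAcomp.sSup_mem hAne
    have hu0 : 0 ≤ u := huA.1.1
    have hut : u ≤ t := huA.1.2
    have hyu : lam ≤ y u := huA.2
    have hult : u < t := lt_of_le_of_ne hut (fun h => by rw [h] at hyu; linarith)
    have hcw : ContinuousWithinAt y (Ico 0 T) u := hycont u (hIccsub ⟨hu0, hut⟩)
    have hev : y ⁻¹' Ioi (lam - ε) ∈ nhdsWithin u (Ico 0 T) :=
      hcw (Ioi_mem_nhds (by linarith : lam - ε < y u))
    obtain ⟨δ, hδ, hball⟩ := Metric.mem_nhdsWithin_iff.1 hev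
    set v := min (u + δ/2) t with hv
    have huv : u < v := lt_min (by linarith) hult
    have hvt : v ≤ t := min_le_right _ _
    have hvT : v < T := lt_of_le_of_lt hvt ht.2
    have hge : ∀ s ∈ Icc u v, lam - ε ≤ y s := by
      intro s hs
      have hsT : s ∈ Ico (0:ℝ) T := ⟨le_trans hu0 hs.1, lt_of_le_of_lt (le_trans hs.2 hvt) ht.2⟩
      have hsu : |s - u| < δ := by
        rw [abs_lt]
        have h1 : s ≤ u + δ/2 := le_trans hs.2 (min_le_left _ _)
        constructor <;> [linarith [hs.1]; linarith]
      exact le_of_lt (hball ⟨by rwa [Metric.mem_ball, Real.dist_eq], hsT⟩)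
    have hmon := monA u v hu0 hvT hge
    have : lam ≤ y v := le_trans hyu (hmon ⟨le_rfl, huv.le⟩ ⟨huv.le, le_rfl⟩ huv.le)
    have hvA : v ∈ A := ⟨⟨le_trans hu0 huv.le, hvt⟩, this⟩
    have : v ≤ u := le_csSup hAcomp.bddAbove hvA
    linarith
  -- monotone on every [0, t]
  have hmonIcc : ∀ t : ℝ, t < T → MonotoneOn y (Icc 0 t) := by
    intro t hlt
    exact monA 0 t le_rfl hlt (fun s hs => by
      rcases le_or_gt 0 t with h0 | h0
      · have := hylam s ⟨hs.1, lt_of_le_of_lt hs.2 hlt⟩; linarith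
      · exact absurd (le_trans hs.1 hs.2) (not_le.2 h0))
  -- nonnegativity of I
  have hI0 : 0 ≤ I := setIntegral_nonneg measurableSet_Ioi
    (fun s hs => le_of_lt (div_pos one_pos (hpos s (le_trans hy0 (le_of_lt hs)))))
  -- the primitive of 1/f
  set φ : ℝ → ℝ := fun x => ∫ s in (y 0)..x, 1 / f s with hφdef
  have hφd : ∀ x : ℝ, lam ≤ x → HasDerivAt φ (1 / f x) x := by
    intro x hx
    have hsub : Set.uIcc (y 0) x ⊆ Ici lam := fun s hs =>
      le_trans (le_inf hy0 hx) hs.1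
    refine intervalIntegral.integral_hasDerivAt_right
      ((hint.mono_set hsub).intervalIntegrable)
      ((measurable_const.div hf.measurable).aestronglyMeasurable.stronglyMeasurableAtFilter)
      (continuousAt_const.div hf.continuousAt (ne_of_gt (hpos x hx)))
  have hζprim : ∀ s : ℝ, HasDerivAt (fun r => ∫ σ in (0:ℝ)..r, ζ σ) (ζ s) s := fun s =>
    intervalIntegral.integral_hasDerivAt_right (hζ.intervalIntegrable 0 s)
      (hζ.stronglyMeasurableAtFilter _ _) hζ.continuousAt
  -- key estimate
  have key : ∀ t ∈ Ico (0:ℝ) T, t + m ≤ 2 * I := by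
    intro t ht
    have hIcc : Icc 0 t ⊆ Ico 0 T := fun s hs => ⟨hs.1, lt_of_le_of_lt hs.2 ht.2⟩
    have hylam' : ∀ s ∈ Icc (0:ℝ) t, lam ≤ y s := fun s hs => hylam s (hIcc hs)
    have hyge : ∀ s ∈ Icc (0:ℝ) t, y 0 ≤ y s := fun s hs =>
      hmonIcc t ht.2 ⟨le_rfl, ht.1⟩ hs hs.1
    set ψ : ℝ → ℝ := fun r => φ (y r) - (∫ σ in (0:ℝ)..r, ζ σ) / 2 with hψdef
    have hψmon : MonotoneOn ψ (Icc 0 t) := by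
      apply monotoneOn_of_deriv_nonneg (convex_Icc 0 t)
      · -- continuity
        intro r hr
        have h1 : ContinuousWithinAt (fun r => φ (y r)) (Icc 0 t) r :=
          (hφd (y r) (hylam' r hr)).continuousAt.comp_continuousWithinAt
            ((hycont.mono hIcc) r hr)
        exact h1.sub (((hζprim r).continuousAt.continuousWithinAt).div_const 2)
      · rw [interior_Icc]
        intro s hs
        have hsI : s ∈ Ico (0:ℝ) T := hIcc ⟨hs.1.le, hs.2.le⟩
        have hyds : HasDerivAt y (y' s) s :=
          (hy s hsI).hasDerivAt (mem_nhds_iff.2 ⟨Ioo 0 T, fun x hx => ⟨hx.1.le, hx.2⟩,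
            isOpen_Ioo, ⟨hs.1, lt_of_lt_of_le hs.2 (le_of_lt ht.2)⟩⟩)
        have hd : HasDerivAt ψ (1 / f (y s) * y' s - ζ s / 2) s := by
          have h1 : HasDerivAt (fun r => φ (y r)) (1 / f (y s) * y' s) s :=
            (hφd (y s) (hylam' s ⟨hs.1.le, hs.2.le⟩)).comp s hyds
          exact h1.sub ((hζprim s).div_const 2)
        exact (hd.differentiableAt).differentiableWithinAt
      · rw [interior_Icc]
        intro s hs
        have hsI : s ∈ Ico (0:ℝ) T := hIcc ⟨hs.1.le, hs.2.le⟩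
        have hyds : HasDerivAt y (y' s) s :=
          (hy s hsI).hasDerivAt (mem_nhds_iff.2 ⟨Ioo 0 T, fun x hx => ⟨hx.1.le, hx.2⟩,
            isOpen_Ioo, ⟨hs.1, lt_of_lt_of_le hs.2 (le_of_lt ht.2)⟩⟩)
        have hd : HasDerivAt ψ (1 / f (y s) * y' s - ζ s / 2) s := by
          have h1 : HasDerivAt (fun r => φ (y r)) (1 / f (y s) * y' s) s :=
            (hφd (y s) (hylam' s ⟨hs.1.le, hs.2.le⟩)).comp s hyds
          exact h1.sub ((hζprim s).div_const 2)
        rw [hd.deriv]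
        have hfy : 0 < f (y s) := hpos _ (hylam' s ⟨hs.1.le, hs.2.le⟩)
        have h2 := hineq s hsI
        have h3 : ζ s / 2 ≤ 1 / f (y s) * y' s := by
          rw [one_div, inv_mul_eq_div, le_div_iff₀ hfy]
          exact h2
        linarith
    -- ψ 0 ≤ ψ t
    have hψ0 : ψ 0 = 0 := by
      simp [hψdef, hφdef, intervalIntegral.integral_same]
    have hψt : 0 ≤ ψ t := by
      rw [← hψ0]
      exact hψmon ⟨le_rfl, ht.1⟩ ⟨ht.1, le_rfl⟩ ht.1
    -- ∫_0^t ζ ≥ t + m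
    have hζlb : t + m ≤ ∫ σ in (0:ℝ)..t, ζ σ := by
      have hmem : (∫ s in (0:ℝ)..t, (ζ s - 1)) ∈
          {x : ℝ | ∃ t ≥ (0:ℝ), x = ∫ s in (0:ℝ)..t, (ζ s - 1)} := ⟨t, ht.1, rfl⟩
      have hml := hm.1 hmem
      have hsplit : (∫ s in (0:ℝ)..t, (ζ s - 1)) = (∫ σ in (0:ℝ)..t, ζ σ) - t := by
        rw [intervalIntegral.integral_sub (hζ.intervalIntegrable 0 t)
          (intervalIntegrable_const)]
        simp
      rw [hsplit] at hml
      linarith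
    -- φ (y t) ≤ I
    have hφle : φ (y t) ≤ I := by
      have hle : y 0 ≤ y t := hyge t ⟨ht.1, le_rfl⟩
      show (∫ s in (y 0)..(y t), 1 / f s) ≤ I
      rw [intervalIntegral.integral_of_le hle]
      apply setIntegral_mono_set
      · exact hint.mono_set (fun s hs => le_trans hy0 (le_of_lt hs))
      · refine (ae_restrict_iff' measurableSet_Ioi).2 (Filter.Eventually.of_forall ?_)
        exact fun s hs => le_of_lt (div_pos one_pos (hpos s (le_trans hy0 (le_of_lt hs))))
      · exact HasSubset.Subset.eventuallyLE Ioc_subset_Ioi_self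
    -- combine
    have : (∫ σ in (0:ℝ)..t, ζ σ) / 2 ≤ φ (y t) := by
      have := hψt; rw [hψdef] at this; simp only at this; linarith
    linarith
  -- conclude
  by_contra hcon
  push_neg at hcon
  set t := (-m + 2*I + T)/2 with htdef
  have h1 : 0 ≤ t := by rw [htdef]; linarith
  have h2 : t < T := by rw [htdef]; linarith
  have h3 := key t ⟨h1, h2⟩
  rw [htdef] at h3
  linarith
end
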